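/- Define ℓ⁰(x) := (1/(2π)) ∫_0^{2π} √(1 + sin²(x)/(1 − cos(u)cos(x))²) du for x ∈ (0,π). Then ℓ⁰ is continuous on (0,π) and its range contains the interval [√2, 2). -/

import Mathlib

open Real

noncomputable def ellZero (x : ℝ) : ℝ :=
  (1 / (2 * π)) * ∫ u in (0 : ℝ)..(2 * π),
    Real.sqrt (1 + Real.sin x ^ 2 / (1 - Real.cos u * Real.cos x) ^ 2)

namespace EllZeroAux

open Set intervalIntegral MeasureTheory Filter Topology

/-- denominator positivity -/
lemma denom_pos {x : ℝ} (hx : |Real.cos x| < 1) (u : ℝ) :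
    0 < 1 - Real.cos u * Real.cos x := by
  have h1 : Real.cos u * Real.cos x ≤ |Real.cos u * Real.cos x| := le_abs_self _
  have h2 : |Real.cos u * Real.cos x| = |Real.cos u| * |Real.cos x| := abs_mul _ _
  have h3 : |Real.cos u| ≤ 1 := Real.abs_cos_le_one u
  nlinarith [abs_nonneg (Real.cos x)]

lemma abs_cos_lt_one {x : ℝ} (hx : x ∈ Set.Ioo 0 π) : |Real.cos x| < 1 := by
  have hs : 0 < Real.sin x := Real.sin_pos_of_pos_of_lt_pi hx.1 hx.2
  have := Real.sin_sq_add_cos_sq x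
  rw [abs_lt]; constructor <;> nlinarith

/-- continuity in `u` of the integrand, for fixed good `x` -/
lemma integrand_continuous {x : ℝ} (hx : |Real.cos x| < 1) :
    Continuous fun u : ℝ =>
      Real.sqrt (1 + Real.sin x ^ 2 / (1 - Real.cos u * Real.cos x) ^ 2) := by
  apply Real.continuous_sqrt.comp
  apply continuous_const.add
  apply Continuous.div continuous_const
  · fun_prop
  · intro u
    have := denom_pos hx u
    positivity

lemma integrand_intble {x : ℝ} (hx : |Real.cos x| < 1) (a b : ℝ) :
    IntervalIntegrable (fun u : ℝ =>
      Real.sqrt (1 + Real.sin x ^ 2 / (1 - Real.cos u * Real.cos x) ^ 2))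
      MeasureTheory.volume a b :=
  (integrand_continuous hx).intervalIntegrable a b

lemma ell_continuous : ContinuousOn ellZero (Set.Ioo 0 π) := by
  have key : ∀ x₀ ∈ Set.Ioo 0 π, ContinuousAt (fun x => ∫ u in (0:ℝ)..(2*π),
      Real.sqrt (1 + Real.sin x ^ 2 / (1 - Real.cos u * Real.cos x) ^ 2)) x₀ := by
    intro x₀ hx₀
    set b : ℝ := (1 + |Real.cos x₀|) / 2 with hb
    have hb1 : |Real.cos x₀| < b := by
      have := abs_cos_lt_one hx₀; rw [hb]; linarith
    have hblt : b < 1 := by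
      have := abs_cos_lt_one hx₀; rw [hb]; linarith
    have hbpos : 0 < 1 - b := by linarith
    have hev : ∀ᶠ x in nhds x₀, |Real.cos x| < b := by
      have hcont : ContinuousAt (fun x => |Real.cos x|) x₀ :=
        (continuous_abs.comp Real.continuous_cos).continuousAt
      exact hcont.eventually_lt continuousAt_const hb1
    apply intervalIntegral.continuousAt_of_dominated_interval
      (bound := fun _ => Real.sqrt (1 + 1 / (1 - b) ^ 2))
    · filter_upwards [hev] with x hx
      exact ((integrand_continuous (hx.trans hblt)).aestronglyMeasurable).restrict
    · filter_upwards [hev] with x hx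
      filter_upwards with u hu
      have hd := denom_pos (hx.trans hblt) u
      have hd2 : 1 - b ≤ 1 - Real.cos u * Real.cos x := by
        have h1 : Real.cos u * Real.cos x ≤ |Real.cos u * Real.cos x| := le_abs_self _
        have h2 : |Real.cos u * Real.cos x| = |Real.cos u| * |Real.cos x| := abs_mul _ _
        have h3 : |Real.cos u| ≤ 1 := Real.abs_cos_le_one u
        nlinarith [abs_nonneg (Real.cos x)]
      rw [Real.norm_eq_abs, abs_of_nonneg (Real.sqrt_nonneg _)]
      apply Real.sqrt_le_sqrt
      have hs2 : Real.sin x ^ 2 ≤ 1 := Real.sin_sq_le_one x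
      have hq : (1 - b) ^ 2 ≤ (1 - Real.cos u * Real.cos x) ^ 2 := by nlinarith
      have : Real.sin x ^ 2 / (1 - Real.cos u * Real.cos x) ^ 2 ≤ 1 / (1 - b) ^ 2 := by
        apply div_le_div₀ (by norm_num) hs2 (by positivity) hq
      linarith
    · exact intervalIntegrable_const
    · filter_upwards with u hu
      have hd := denom_pos (abs_cos_lt_one hx₀) u
      apply Real.continuous_sqrt.continuousAt.comp
      apply ContinuousAt.add continuousAt_const
      apply ContinuousAt.div
      · fun_prop
      · fun_prop
      · positivity
  intro x hx
  apply ContinuousAt.continuousWithinAt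
  exact continuousAt_const.mul (key x hx)


lemma ell_pi_div_two : ellZero (π / 2) = Real.sqrt 2 := by
  have hpi : (0:ℝ) < π := Real.pi_pos
  have : (∫ u in (0:ℝ)..(2*π),
      Real.sqrt (1 + Real.sin (π/2) ^ 2 / (1 - Real.cos u * Real.cos (π/2)) ^ 2))
      = ∫ u in (0:ℝ)..(2*π), Real.sqrt 2 := by
    apply intervalIntegral.integral_congr
    intro u hu
    simp [Real.sin_pi_div_two, Real.cos_pi_div_two]
    norm_num
  rw [ellZero, this, intervalIntegral.integral_const]
  rw [smul_eq_mul]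
  field_simp
  ring

/-- antiderivative for the spike comparison integral -/
lemma spike_hasDerivAt (s c r e u : ℝ) (hc : 0 < c) (hr : r = Real.sqrt (2*c)) :
    HasDerivAt (fun v => s / c * r * Real.arctan ((v - e) / r))
      (s / (c + (u - e) ^ 2 / 2)) u := by
  have hrpos : 0 < r := by rw [hr]; positivity
  have hr2 : r ^ 2 = 2 * c := by rw [hr, Real.sq_sqrt (by positivity)]
  have h1 : HasDerivAt (fun v : ℝ => (v - e) / r) (1 / r) u := by
    simpa using ((hasDerivAt_id u).sub_const e).div_const r
  have h2 := (Real.hasDerivAt_arctan ((u - e) / r)).comp u h1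
  have h3 := h2.const_mul (s / c * r)
  refine h3.congr_deriv ?_
  have hrne : r ≠ 0 := ne_of_gt hrpos
  have e1 : 1 + ((u - e) / r) ^ 2 = (2 * c + (u - e) ^ 2) / r ^ 2 := by
    rw [div_pow, hr2]; field_simp
  rw [e1, one_div_div]
  have h2c : (0:ℝ) < 2 * c + (u - e) ^ 2 := by positivity
  field_simp
  linear_combination s * hr2

lemma spike_integral (s c r e a b : ℝ) (hc : 0 < c) (hr : r = Real.sqrt (2*c)) :
    ∫ u in a..b, s / (c + (u - e) ^ 2 / 2)
      = s / c * r * (Real.arctan ((b - e) / r) - Real.arctan ((a - e) / r)) := by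
  rw [mul_sub]
  apply intervalIntegral.integral_eq_sub_of_hasDerivAt
  · intro u hu; exact spike_hasDerivAt s c r e u hc hr
  · apply Continuous.intervalIntegrable
    apply Continuous.div continuous_const (by fun_prop)
    intro u; positivity

lemma sqrt_le_integrand {s d : ℝ} (hs : 0 ≤ s) (hd : 0 < d) :
    s / d ≤ Real.sqrt (1 + s ^ 2 / d ^ 2) := by
  have h1 : s / d = Real.sqrt ((s / d) ^ 2) := (Real.sqrt_sq (by positivity)).symm
  rw [h1]
  apply Real.sqrt_le_sqrt
  rw [div_pow]
  linarith

lemma one_le_integrand {s d : ℝ} : 1 ≤ Real.sqrt (1 + s ^ 2 / d ^ 2) := by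
  have h : (1:ℝ) ≤ 1 + s ^ 2 / d ^ 2 := le_add_of_nonneg_right (by positivity)
  calc (1:ℝ) = Real.sqrt 1 := by simp
    _ ≤ _ := Real.sqrt_le_sqrt h

lemma spike_intble (s c e a b : ℝ) (hc : 0 < c) :
    IntervalIntegrable (fun u => s / (c + (u - e) ^ 2 / 2)) MeasureTheory.volume a b := by
  apply Continuous.intervalIntegrable
  apply Continuous.div continuous_const (by fun_prop)
  intro u; positivity

lemma denom_le {x u e : ℝ} (hcx0 : 0 ≤ Real.cos x) (hce : Real.cos (u - e) = Real.cos u) :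
    1 - Real.cos u * Real.cos x ≤ (1 - Real.cos x) + (u - e) ^ 2 / 2 := by
  have h1 : 1 - (u - e) ^ 2 / 2 ≤ Real.cos (u - e) := Real.one_sub_sq_div_two_le_cos
  have h2 : Real.cos u ≤ 1 := Real.cos_le_one u
  have h3 : Real.cos x ≤ 1 := Real.cos_le_one x
  nlinarith

lemma ell_lower {x δ : ℝ} (hx : x ∈ Set.Ioo 0 (π/2)) (hδ0 : 0 < δ) (hδπ : δ ≤ π) :
    Real.sin x / (1 - Real.cos x) * Real.sqrt (2 * (1 - Real.cos x)) *
        Real.arctan (δ / Real.sqrt (2 * (1 - Real.cos x))) * 2 + (2 * π - 2 * δ)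
      ≤ ∫ u in (0:ℝ)..(2*π),
          Real.sqrt (1 + Real.sin x ^ 2 / (1 - Real.cos u * Real.cos x) ^ 2) := by
  have hpi : (0:ℝ) < π := Real.pi_pos
  have hxI : x ∈ Set.Ioo 0 π := ⟨hx.1, hx.2.trans (by linarith)⟩
  have habs : |Real.cos x| < 1 := abs_cos_lt_one hxI
  have hs : 0 < Real.sin x := Real.sin_pos_of_pos_of_lt_pi hxI.1 hxI.2
  have hc : 0 < 1 - Real.cos x := by
    have := abs_lt.mp habs; linarith [this.2]
  have hcx0 : 0 ≤ Real.cos x := Real.cos_nonneg_of_mem_Icc ⟨by linarith [hx.1], hx.2.le⟩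
  have hord1 : (0:ℝ) ≤ δ := hδ0.le
  have hord2 : δ ≤ 2 * π - δ := by linarith
  have hord3 : 2 * π - δ ≤ 2 * π := by linarith
  have hintf := integrand_intble habs
  have h1 := intervalIntegral.integral_add_adjacent_intervals (μ := MeasureTheory.volume)
    (hintf 0 δ) (hintf δ (2*π))
  have h2 := intervalIntegral.integral_add_adjacent_intervals (μ := MeasureTheory.volume)
    (hintf δ (2*π-δ)) (hintf (2*π-δ) (2*π))
  -- piece A
  have hA : Real.sin x / (1 - Real.cos x) * Real.sqrt (2 * (1 - Real.cos x)) *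
        Real.arctan (δ / Real.sqrt (2 * (1 - Real.cos x)))
      ≤ ∫ u in (0:ℝ)..δ, Real.sqrt (1 + Real.sin x ^ 2 / (1 - Real.cos u * Real.cos x) ^ 2) := by
    have heq := spike_integral (Real.sin x) (1 - Real.cos x) (Real.sqrt (2 * (1 - Real.cos x)))
      0 0 δ hc rfl
    simp only [sub_zero, zero_div, Real.arctan_zero] at heq
    rw [← heq]
    have hig : IntervalIntegrable (fun u => Real.sin x / (1 - Real.cos x + u ^ 2 / 2))
        MeasureTheory.volume 0 δ := by
      simpa using spike_intble (Real.sin x) (1 - Real.cos x) 0 0 δ hc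
    apply intervalIntegral.integral_mono_on hord1 hig (hintf 0 δ)
    intro u hu
    have hd : 0 < 1 - Real.cos u * Real.cos x := denom_pos habs u
    have hle : 1 - Real.cos u * Real.cos x ≤ (1 - Real.cos x) + u ^ 2 / 2 := by
      have := denom_le (x := x) (u := u) (e := 0) hcx0 (by rw [sub_zero])
      simpa using this
    calc Real.sin x / (1 - Real.cos x + u ^ 2 / 2)
        ≤ Real.sin x / (1 - Real.cos u * Real.cos x) :=
          div_le_div_of_nonneg_left hs.le hd hle
      _ ≤ Real.sqrt (1 + Real.sin x ^ 2 / (1 - Real.cos u * Real.cos x) ^ 2) :=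
          sqrt_le_integrand hs.le hd
  -- piece C
  have hC : Real.sin x / (1 - Real.cos x) * Real.sqrt (2 * (1 - Real.cos x)) *
        Real.arctan (δ / Real.sqrt (2 * (1 - Real.cos x)))
      ≤ ∫ u in (2*π-δ)..(2*π),
          Real.sqrt (1 + Real.sin x ^ 2 / (1 - Real.cos u * Real.cos x) ^ 2) := by
    have heq := spike_integral (Real.sin x) (1 - Real.cos x) (Real.sqrt (2 * (1 - Real.cos x)))
      (2*π) (2*π-δ) (2*π) hc rfl
    have e1 : (2*π - (2*π) : ℝ) = 0 := by ring
    have e2 : (2*π - δ - 2*π : ℝ) = -δ := by ring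
    rw [e1, e2] at heq
    simp only [zero_div, Real.arctan_zero, neg_div, Real.arctan_neg, zero_sub, neg_neg] at heq
    rw [← heq]
    apply intervalIntegral.integral_mono_on hord3
      (spike_intble (Real.sin x) (1 - Real.cos x) (2*π) (2*π-δ) (2*π) hc) (hintf (2*π-δ) (2*π))
    intro u hu
    have hd : 0 < 1 - Real.cos u * Real.cos x := denom_pos habs u
    have hle : 1 - Real.cos u * Real.cos x ≤ (1 - Real.cos x) + (u - 2*π) ^ 2 / 2 :=
      denom_le hcx0 (Real.cos_sub_two_pi u)
    calc Real.sin x / ((1 - Real.cos x) + (u - 2*π) ^ 2 / 2)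
        ≤ Real.sin x / (1 - Real.cos u * Real.cos x) :=
          div_le_div_of_nonneg_left hs.le hd hle
      _ ≤ Real.sqrt (1 + Real.sin x ^ 2 / (1 - Real.cos u * Real.cos x) ^ 2) :=
          sqrt_le_integrand hs.le hd
  -- piece B
  have hB : 2 * π - 2 * δ
      ≤ ∫ u in δ..(2*π-δ),
          Real.sqrt (1 + Real.sin x ^ 2 / (1 - Real.cos u * Real.cos x) ^ 2) := by
    have heq : (∫ _ in δ..(2*π-δ), (1:ℝ)) = 2 * π - 2 * δ := by
      simp; ring
    rw [← heq]
    apply intervalIntegral.integral_mono_on hord2 intervalIntegrable_const (hintf δ (2*π-δ))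
    intro u hu
    exact one_le_integrand
  linarith

lemma K_eq {x : ℝ} (hx : x ∈ Set.Ioo 0 π) :
    Real.sin x / (1 - Real.cos x) * Real.sqrt (2 * (1 - Real.cos x))
      = Real.sqrt (2 * (1 + Real.cos x)) := by
  have hs : 0 < Real.sin x := Real.sin_pos_of_pos_of_lt_pi hx.1 hx.2
  have habs := abs_lt.mp (abs_cos_lt_one hx)
  have hc : 0 < 1 - Real.cos x := by linarith [habs.2]
  have hsq : (Real.sin x / (1 - Real.cos x) * Real.sqrt (2 * (1 - Real.cos x))) ^ 2
      = 2 * (1 + Real.cos x) := by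
    rw [mul_pow, Real.sq_sqrt (by positivity), div_pow]
    have hsin2 : Real.sin x ^ 2 = (1 - Real.cos x) * (1 + Real.cos x) := by
      nlinarith [Real.sin_sq_add_cos_sq x]
    field_simp [hsin2]
    ring
    linarith [Real.sin_sq_add_cos_sq x]
  calc Real.sin x / (1 - Real.cos x) * Real.sqrt (2 * (1 - Real.cos x))
      = Real.sqrt ((Real.sin x / (1 - Real.cos x) * Real.sqrt (2 * (1 - Real.cos x))) ^ 2) :=
        (Real.sqrt_sq (by positivity)).symm
    _ = Real.sqrt (2 * (1 + Real.cos x)) := by rw [hsq]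

open Filter Topology in
lemma tendsto_lb {δ : ℝ} (hδ : 0 < δ) :
    Tendsto (fun x => Real.sqrt (2 * (1 + Real.cos x)) *
        Real.arctan (δ / Real.sqrt (2 * (1 - Real.cos x))))
      (nhdsWithin 0 (Set.Ioi 0)) (nhds (2 * (π / 2))) := by
  have T1 : Tendsto (fun x : ℝ => Real.sqrt (2 * (1 + Real.cos x)))
      (nhdsWithin 0 (Set.Ioi 0)) (nhds 2) := by
    have hco : Continuous fun x : ℝ => Real.sqrt (2 * (1 + Real.cos x)) := by fun_prop
    have hval : Real.sqrt (2 * (1 + Real.cos 0)) = 2 := by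
      rw [Real.cos_zero, show (2:ℝ) * (1 + 1) = 2 ^ 2 by norm_num,
        Real.sqrt_sq (by norm_num)]
    have h := (hco.tendsto 0).mono_left (nhdsWithin_le_nhds (s := Set.Ioi (0:ℝ)))
    rwa [hval] at h
  have T2 : Tendsto (fun x : ℝ => Real.arctan (δ / Real.sqrt (2 * (1 - Real.cos x))))
      (nhdsWithin 0 (Set.Ioi 0)) (nhds (π / 2)) := by
    have hinner : Tendsto (fun x : ℝ => Real.sqrt (2 * (1 - Real.cos x)))
        (nhdsWithin 0 (Set.Ioi 0)) (nhdsWithin 0 (Set.Ioi 0)) := by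
      rw [tendsto_nhdsWithin_iff]
      constructor
      · have hco : Continuous fun x : ℝ => Real.sqrt (2 * (1 - Real.cos x)) := by fun_prop
        have := (hco.tendsto 0).mono_left (nhdsWithin_le_nhds (s := Set.Ioi (0:ℝ)))
        simpa using this
      · filter_upwards [Ioo_mem_nhdsGT_of_mem (Set.mem_Ico.mpr ⟨le_refl 0, Real.pi_pos⟩)]
          with x hx
        have : |Real.cos x| < 1 := abs_cos_lt_one hx
        have := abs_lt.mp this
        have : (0:ℝ) < 2 * (1 - Real.cos x) := by linarith [this.2]
        exact Set.mem_Ioi.mpr (Real.sqrt_pos.mpr this)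
    have hdiv : Tendsto (fun r : ℝ => δ / r) (nhdsWithin 0 (Set.Ioi 0)) atTop := by
      have h1 : Tendsto (fun r : ℝ => r⁻¹) (nhdsWithin 0 (Set.Ioi 0)) atTop :=
        tendsto_inv_nhdsGT_zero
      have := h1.const_mul_atTop hδ
      simpa [div_eq_mul_inv] using this
    have harc : Tendsto Real.arctan atTop (nhds (π / 2)) :=
      tendsto_nhds_of_tendsto_nhdsWithin Real.tendsto_arctan_atTop
    exact harc.comp (hdiv.comp hinner)
  simpa using T1.mul T2

end EllZeroAux

open Filter Topology EllZeroAux in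
theorem ellZero_continuous_and_range :
    ContinuousOn ellZero (Set.Ioo 0 π) ∧
      Set.Ico (Real.sqrt 2) 2 ⊆ ellZero '' Set.Ioo 0 π := by
  refine ⟨ell_continuous, ?_⟩
  intro y hy
  obtain ⟨hy1, hy2⟩ := hy
  have hpi : (0:ℝ) < π := Real.pi_pos
  have hs2 : (0:ℝ) < Real.sqrt 2 := Real.sqrt_pos.mpr (by norm_num)
  have hy0 : 0 < y := lt_of_lt_of_le hs2 hy1
  set δ : ℝ := π * (2 - y) / 2 with hδdef
  have h2y : (0:ℝ) < 2 - y := by linarith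
  have hδ0 : 0 < δ := by rw [hδdef]; positivity
  have hδπ : δ ≤ π := by rw [hδdef]; nlinarith
  have hlim : Tendsto (fun x => (1/(2*π)) * (Real.sqrt (2 * (1 + Real.cos x)) *
        Real.arctan (δ / Real.sqrt (2 * (1 - Real.cos x))) * 2 + (2 * π - 2 * δ)))
      (nhdsWithin 0 (Set.Ioi 0)) (nhds ((1/(2*π)) * ((2 * (π/2)) * 2 + (2 * π - 2 * δ)))) :=
    (((tendsto_lb hδ0).mul_const 2).add_const (2 * π - 2 * δ)).const_mul (1/(2*π))
  have hval : (1/(2*π)) * ((2 * (π/2)) * 2 + (2 * π - 2 * δ)) = (2 + y) / 2 := by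
    rw [hδdef]; field_simp; ring
  rw [hval] at hlim
  have hygt : y < (2 + y) / 2 := by linarith
  have hev1 : ∀ᶠ x in nhdsWithin 0 (Set.Ioi 0), y < (1/(2*π)) *
      (Real.sqrt (2 * (1 + Real.cos x)) *
        Real.arctan (δ / Real.sqrt (2 * (1 - Real.cos x))) * 2 + (2 * π - 2 * δ)) :=
    hlim.eventually (eventually_gt_nhds hygt)
  have hev2 : ∀ᶠ x in nhdsWithin 0 (Set.Ioi 0), x ∈ Set.Ioo 0 (π/2) :=
    eventually_of_mem (Ioo_mem_nhdsGT_of_mem ⟨le_refl 0, by positivity⟩) (fun x hx => hx)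
  obtain ⟨x, hxG, hxIoo⟩ := (hev1.and hev2).exists
  have hxI : x ∈ Set.Ioo 0 π := ⟨hxIoo.1, hxIoo.2.trans (by linarith)⟩
  -- the lower bound
  have hlow := ell_lower hxIoo hδ0 hδπ
  rw [K_eq hxI] at hlow
  have hell : y < ellZero x := by
    have h1 : (1/(2*π)) * (Real.sqrt (2 * (1 + Real.cos x)) *
        Real.arctan (δ / Real.sqrt (2 * (1 - Real.cos x))) * 2 + (2 * π - 2 * δ))
        ≤ ellZero x := by
      rw [ellZero]
      apply mul_le_mul_of_nonneg_left hlow (by positivity)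
    linarith
  -- IVT
  have hxlt : x < π/2 := hxIoo.2
  have hsub : Set.Icc x (π/2) ⊆ Set.Ioo 0 π := fun z hz =>
    ⟨lt_of_lt_of_le hxI.1 hz.1, lt_of_le_of_lt hz.2 (by linarith)⟩
  have hcont : ContinuousOn ellZero (Set.Icc x (π/2)) := ell_continuous.mono hsub
  have hy' : y ∈ Set.Icc (ellZero (π/2)) (ellZero x) := by
    rw [ell_pi_div_two]
    exact ⟨hy1, hell.le⟩
  obtain ⟨z, hz, hzy⟩ := intermediate_value_Icc' hxlt.le hcont hy'
  exact ⟨z, hsub hz, hzy⟩
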